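/- Let R be a commutative ring, D an R-linear triangulated category, M : D → Mod-R a cohomological contravariant functor, and A a full subcategory of D such that A[1] = A, A is precovering in D, and A^{*n} = D for some n ≥ 1. Suppose that M is A-finitely generated and that, for every object D of D, the kernel of every natural transformation D(-,D) → M is also A-finitely generated. Then M is isomorphic to a direct summand of a representable functor. In particular, if D is karoubian, then M is representable. -/

import Mathlib

open CategoryTheory CategoryTheory.Limits CategoryTheory.Pretriangulated Opposite

universe w v u

namespace Paper

variable (R : Type w) [CommRing R] {D : Type u} [Category.{v} D] [Preadditive D]
  [CategoryTheory.Linear R D] [HasZeroObject D] [HasShift D ℤ]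
  [∀ n : ℤ, (shiftFunctor D n).Additive] [Pretriangulated D]

instance oppositeHomModule (X Y : Dᵒᵖ) : Module R (X ⟶ Y) where
  smul r f := (r • f.unop).op
  one_smul f := Quiver.Hom.unop_inj (one_smul _ _)
  mul_smul r s f := Quiver.Hom.unop_inj (mul_smul _ _ _)
  smul_zero r := Quiver.Hom.unop_inj (smul_zero _)
  smul_add r f g := Quiver.Hom.unop_inj (smul_add _ _ _)
  add_smul r s f := Quiver.Hom.unop_inj (add_smul _ _ _)
  zero_smul f := Quiver.Hom.unop_inj (zero_smul _ _)

instance oppositeLinear : CategoryTheory.Linear R Dᵒᵖ where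
  smul_comp X Y Z r f g := by
    exact Quiver.Hom.unop_inj (CategoryTheory.Linear.comp_smul _ _ _ g.unop r f.unop)
  comp_smul X Y Z f r g := by
    exact Quiver.Hom.unop_inj (CategoryTheory.Linear.smul_comp _ _ _ r g.unop f.unop)

/-- `M : D → Mod-R` (contravariant) is cohomological. -/
def IsCohomological (M : Dᵒᵖ ⥤ ModuleCat.{v} R) : Prop :=
  ∀ T : Pretriangulated.Triangle D, T ∈ (distTriang D) →
    Function.Exact (M.map T.mor₂.op) (M.map T.mor₁.op)

variable (D)

/-- the closure of a class of objects under direct summands -/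
def smdClosure (A : Set D) : Set D :=
  {Y | ∃ X ∈ A, ∃ (s : Y ⟶ X) (r : X ⟶ Y), s ≫ r = 𝟙 Y}

/-- `A * B`: objects `Y` fitting in a triangle `X → Y → Z → X[1]` with `X ∈ A`, `Z ∈ B`. -/
def starSets (A B : Set D) : Set D :=
  {Y | ∃ (X Z : D) (_ : X ∈ A) (_ : Z ∈ B) (f : X ⟶ Y) (g : Y ⟶ Z)
    (h : Z ⟶ X⟦(1 : ℤ)⟧), Pretriangulated.Triangle.mk f g h ∈ (distTriang D)}

/-- `starPow A n = A^{*n}` (for `n ≥ 1`):  `A^{*1} = smd A` and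
`A^{*(n+1)} = smd (A^{*n} * A^{*1})`. -/
def starPow (A : Set D) : ℕ → Set D
  | 0 => ∅
  | 1 => smdClosure D A
  | (n + 2) => smdClosure D (starSets D (starPow A (n + 1)) (smdClosure D A))

variable {D}

/-- `M` is `A`-finitely generated. -/
def IsRelFinitelyGenerated (A : Set D) (M : Dᵒᵖ ⥤ ModuleCat.{v} R) : Prop :=
  ∃ (A₀ : D) (_ : A₀ ∈ A) (α : (linearYoneda R D).obj A₀ ⟶ M),
    ∀ X ∈ A, Function.Surjective (α.app (op X))

/-- The kernel of the natural transformation `β : D(-,D₀) → M` is `A`-finitely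
generated. -/
def KernelIsRelFG (A : Set D) {M : Dᵒᵖ ⥤ ModuleCat.{v} R} {D₀ : D}
    (β : (linearYoneda R D).obj D₀ ⟶ M) : Prop :=
  ∃ (A₀ : D) (_ : A₀ ∈ A) (g : A₀ ⟶ D₀),
    (linearYoneda R D).map g ≫ β = 0 ∧
    ∀ X ∈ A, ∀ x : ((linearYoneda R D).obj D₀).obj (op X), β.app (op X) x = 0 →
      ∃ t : X ⟶ A₀, ((linearYoneda R D).map g).app (op X) t = x


/-- `M` is isomorphic to a direct summand of a representable functor. -/
def IsSummandOfRepresentable (M : Dᵒᵖ ⥤ ModuleCat.{v} R) : Prop :=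
  ∃ (D₀ : D) (s : M ⟶ (linearYoneda R D).obj D₀) (r : (linearYoneda R D).obj D₀ ⟶ M),
    s ≫ r = 𝟙 M

/-- `M` is representable. -/
def IsRepresentableMod (M : Dᵒᵖ ⥤ ModuleCat.{v} R) : Prop :=
  ∃ D₀ : D, Nonempty (M ≅ (linearYoneda R D).obj D₀)

section RepresentabilityProof

variable {R}
variable {M N : Dᵒᵖ ⥤ ModuleCat.{v} R}

lemma nat_eq_elt {B : D} (β : (linearYoneda R D).obj B ⟶ N)
    {Y : D} (u : Y ⟶ B) :
    β.app (op Y) u = N.map u.op (β.app (op B) (𝟙 B)) := by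
  have h := congrArg (fun φ => ModuleCat.Hom.hom φ (𝟙 B)) (β.naturality u.op)
  exact (congrArg (fun x => β.app (op Y) x) (Category.comp_id u).symm).trans h

lemma nat_app_comp {B : D} (β : (linearYoneda R D).obj B ⟶ N)
    {Y Y' : D} (f : Y' ⟶ Y) (u : Y ⟶ B) :
    β.app (op Y') (f ≫ u) = N.map f.op (β.app (op Y) u) := by
  rw [nat_eq_elt β (f ≫ u), nat_eq_elt β u, op_comp, N.map_comp]
  rfl


variable [M.Additive] [M.Linear R]

/-- The natural transformation `D(-,B) ⟶ M` associated to `m : M(B)`. -/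
noncomputable def eltNat {B : D} (m : M.obj (op B)) : (linearYoneda R D).obj B ⟶ M where
  app Y := ModuleCat.ofHom
    { toFun := fun u => M.map (Quiver.Hom.op (u : unop Y ⟶ B)) m
      map_add' := fun u v => by
        show M.map ((u + v : unop Y ⟶ B)).op m = M.map u.op m + M.map v.op m
        rw [op_add _ u v, M.map_add]
        rfl
      map_smul' := fun r u => by
        show M.map ((r • u : unop Y ⟶ B)).op m = r • M.map u.op m
        rw [show ((r • u : unop Y ⟶ B)).op = r • u.op from rfl, M.map_smul]
        rfl }
  naturality {Y Y'} f := by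
    apply ModuleCat.hom_ext
    apply LinearMap.ext
    intro u
    show M.map ((f.unop ≫ u)).op m = M.map f (M.map (Quiver.Hom.op (u : unop Y ⟶ B)) m)
    exact congrArg (fun φ => ModuleCat.Hom.hom φ m) (M.map_comp (Quiver.Hom.op (u : unop Y ⟶ B)) f)

lemma eltNat_app {B : D} (m : M.obj (op B)) {Y : D} (u : Y ⟶ B) :
    (eltNat m).app (op Y) u = M.map u.op m := rfl

lemma linearYoneda_map_app_eq {A₀ B : D} (g : A₀ ⟶ B) {X : D} (t : X ⟶ A₀) :
    ((linearYoneda R D).map g).app (op X) t = t ≫ g := rfl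

lemma comp_app_apply {B : D} {N : Dᵒᵖ ⥤ ModuleCat.{v} R} (g : A₀ ⟶ B)
    (β : (linearYoneda R D).obj B ⟶ N) {X : D} (t : X ⟶ A₀) :
    ((linearYoneda R D).map g ≫ β).app (op X) t = β.app (op X) (t ≫ g) := rfl

/-- One step of the construction: kill the kernel of `β` on `A`. -/
lemma step_exists (hM : IsCohomological R M) (A : Set D)
    (hker : ∀ (D₀ : D) (β : (linearYoneda R D).obj D₀ ⟶ M), KernelIsRelFG R A β)
    (B : D) (β : (linearYoneda R D).obj B ⟶ M) :
    ∃ (B' : D) (p : B ⟶ B') (β' : (linearYoneda R D).obj B' ⟶ M),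
      ((linearYoneda R D).map p ≫ β' = β) ∧
      (∀ X ∈ A, ∀ x : X ⟶ B, β.app (op X) x = 0 → x ≫ p = 0) := by
  obtain ⟨A₀, hA₀, g, hzero, hfac⟩ := hker B β
  obtain ⟨B', p, h3, hT⟩ := Pretriangulated.distinguished_cocone_triangle g
  have hg0 : β.app (op A₀) g = 0 := by
    have h := congrArg
      (fun (η : (linearYoneda R D).obj A₀ ⟶ M) => η.app (op A₀) (𝟙 A₀)) hzero
    calc β.app (op A₀) g
        = β.app (op A₀) (𝟙 A₀ ≫ g) :=
          congrArg (fun (x : A₀ ⟶ B) => β.app (op A₀) x) (Category.id_comp g).symm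
      _ = ((linearYoneda R D).map g ≫ β).app (op A₀) (𝟙 A₀) := rfl
      _ = (0 : (linearYoneda R D).obj A₀ ⟶ M).app (op A₀) (𝟙 A₀) := h
      _ = 0 := rfl
  have hm0 : M.map g.op (β.app (op B) (𝟙 B)) = 0 := by
    rw [← nat_eq_elt β g]; exact hg0
  obtain ⟨m', hm'⟩ := (hM _ hT (β.app (op B) (𝟙 B))).mp hm0
  have hm2 : M.map p.op m' = β.app (op B) (𝟙 B) := hm'
  refine ⟨B', p, eltNat m', ?_, ?_⟩
  · apply NatTrans.ext
    funext Y
    apply ModuleCat.hom_ext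
    apply LinearMap.ext
    intro u
    have hYY : (unop Y) = Y.unop := rfl
    show (eltNat m').app Y ((u : unop Y ⟶ B) ≫ p) = β.app Y u
    calc (eltNat m').app Y ((u : unop Y ⟶ B) ≫ p)
        = M.map ((u : unop Y ⟶ B) ≫ p).op m' := rfl
      _ = M.map (Quiver.Hom.op (u : unop Y ⟶ B)) (M.map p.op m') := by
          exact congrArg (fun φ => ModuleCat.Hom.hom φ m') (M.map_comp p.op (Quiver.Hom.op (u : unop Y ⟶ B)))
      _ = M.map (Quiver.Hom.op (u : unop Y ⟶ B)) (β.app (op B) (𝟙 B)) := by rw [hm2]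
      _ = β.app Y u := (nat_eq_elt β (u : unop Y ⟶ B)).symm
  · intro X hX x hx
    obtain ⟨t, ht⟩ := hfac X hX x hx
    rw [linearYoneda_map_app_eq] at ht
    have hgp : g ≫ p = 0 := Pretriangulated.comp_distTriang_mor_zero₁₂ _ hT
    rw [← ht, Category.assoc, hgp, Limits.comp_zero]

/-- surjectivity passes to direct summands -/
lemma surj_smd {B : D} (β : (linearYoneda R D).obj B ⟶ M) {S : Set D}
    (hs : ∀ X ∈ S, Function.Surjective (β.app (op X))) :
    ∀ Y ∈ smdClosure D S, Function.Surjective (β.app (op Y)) := by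
  rintro Y ⟨X, hX, s, r, hsr⟩ m
  obtain ⟨u, hu⟩ := hs X hX (M.map r.op m)
  refine ⟨s ≫ u, ?_⟩
  rw [nat_app_comp β s u, hu]
  calc M.map s.op (M.map r.op m)
      = M.map (r.op ≫ s.op) m := by rw [M.map_comp]; rfl
    _ = M.map ((s ≫ r)).op m := by rw [op_comp]
    _ = M.map ((𝟙 Y)).op m := by rw [hsr]
    _ = m := by rw [op_id, M.map_id]; rfl

/-- kernel-vanishing (relative to a morphism) passes to direct summands -/
lemma death_smd {B B' : D} (β : (linearYoneda R D).obj B ⟶ M) (q : B ⟶ B') {S : Set D}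
    (hd : ∀ X ∈ S, ∀ x : X ⟶ B, β.app (op X) x = 0 → x ≫ q = 0) :
    ∀ Y ∈ smdClosure D S, ∀ x : Y ⟶ B, β.app (op Y) x = 0 → x ≫ q = 0 := by
  rintro Y ⟨X, hX, s, r, hsr⟩ x hx
  have h0 : β.app (op X) (r ≫ x) = 0 := by
    rw [nat_app_comp, hx]; exact map_zero _
  have h1 := hd X hX _ h0
  calc x ≫ q = (s ≫ r) ≫ x ≫ q := by rw [hsr, Category.id_comp]
    _ = s ≫ ((r ≫ x) ≫ q) := by simp [Category.assoc]
    _ = 0 := by rw [h1, Limits.comp_zero]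

lemma smd_shift_pos {S : Set D} (hS : ∀ W ∈ S, W⟦(1:ℤ)⟧ ∈ S) :
    ∀ Y ∈ smdClosure D S, Y⟦(1:ℤ)⟧ ∈ smdClosure D S := by
  rintro Y ⟨W, hW, s, r, hsr⟩
  exact ⟨W⟦(1:ℤ)⟧, hS W hW, s⟦(1:ℤ)⟧', r⟦(1:ℤ)⟧',
    by rw [← CategoryTheory.Functor.map_comp, hsr, CategoryTheory.Functor.map_id]⟩

lemma smd_shift_neg (A : Set D) (hA1 : (fun X : D => X⟦(1 : ℤ)⟧) '' A = A) :
    ∀ Z ∈ smdClosure D A, Z⟦(-1:ℤ)⟧ ∈ smdClosure D A := by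
  rintro Z ⟨W, hW, s, r, hsr⟩
  have hmem : W ∈ (fun X : D => X⟦(1 : ℤ)⟧) '' A := by rw [hA1]; exact hW
  obtain ⟨W₀, hW₀, hW1⟩ := hmem
  dsimp at hW1
  subst hW1
  refine ⟨W₀, hW₀, s⟦(-1:ℤ)⟧' ≫ (shiftShiftNeg W₀ (1:ℤ)).hom,
    (shiftShiftNeg W₀ (1:ℤ)).inv ≫ r⟦(-1:ℤ)⟧', ?_⟩
  rw [Category.assoc, Iso.hom_inv_id_assoc, ← CategoryTheory.Functor.map_comp, hsr,
    CategoryTheory.Functor.map_id]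

lemma starSets_shift {P Q : Set D} (hP : ∀ W ∈ P, W⟦(1:ℤ)⟧ ∈ P)
    (hQ : ∀ W ∈ Q, W⟦(1:ℤ)⟧ ∈ Q) :
    ∀ Y ∈ starSets D P Q, Y⟦(1:ℤ)⟧ ∈ starSets D P Q := by
  rintro Y ⟨X, Z, hX, hZ, f, g, h, hT⟩
  have hT1 := Pretriangulated.Triangle.shift_distinguished _ hT 1
  exact ⟨X⟦(1:ℤ)⟧, Z⟦(1:ℤ)⟧, hP X hX, hQ Z hZ, _, _, _, hT1⟩

lemma starPow_shift (A : Set D) (hA1 : (fun X : D => X⟦(1 : ℤ)⟧) '' A = A)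
    (hA : ∀ W ∈ A, W⟦(1:ℤ)⟧ ∈ A) :
    ∀ k, ∀ Y ∈ starPow D A k, Y⟦(1:ℤ)⟧ ∈ starPow D A k := by
  intro k
  induction k using Nat.strong_induction_on with
  | _ k ih =>
    obtain _|_|k := k
    · rintro Y h; exact absurd h (Set.notMem_empty Y)
    · exact smd_shift_pos hA
    · exact smd_shift_pos (starSets_shift (ih (k+1) (by omega)) (smd_shift_pos hA))

/-- the package of hypotheses used for the construction -/
def GoodSetup (A : Set D) (M : Dᵒᵖ ⥤ ModuleCat.{v} R) : Prop :=
  IsCohomological R M ∧ IsRelFinitelyGenerated R A M ∧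
    ∀ (D₀ : D) (β : (linearYoneda R D).obj D₀ ⟶ M), KernelIsRelFG R A β

variable (A : Set D)

noncomputable def chainSig (H : GoodSetup A M) :
    ℕ → Σ' B : D, ((linearYoneda R D).obj B ⟶ M) :=
  fun n => Nat.rec
    ⟨H.2.1.choose, H.2.1.choose_spec.choose_spec.choose⟩
    (fun _ prev => ⟨(step_exists H.1 A H.2.2 prev.1 prev.2).choose,
      (step_exists H.1 A H.2.2 prev.1 prev.2).choose_spec.choose_spec.choose⟩) n

noncomputable def chainB (H : GoodSetup A M) (i : ℕ) : D := (chainSig A H i).1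

noncomputable def chainβ (H : GoodSetup A M) (i : ℕ) :
    (linearYoneda R D).obj (chainB A H i) ⟶ M :=
  (chainSig A H i).2

noncomputable def chainp (H : GoodSetup A M) (i : ℕ) :
    chainB A H i ⟶ chainB A H (i+1) :=
  (step_exists H.1 A H.2.2 (chainSig A H i).1 (chainSig A H i).2).choose_spec.choose

variable (H : GoodSetup A M)

lemma chain_compat (i : ℕ) :
    (linearYoneda R D).map (chainp A H i) ≫ chainβ A H (i+1) = chainβ A H i :=
  (step_exists H.1 A H.2.2 (chainSig A H i).1 (chainSig A H i).2
    ).choose_spec.choose_spec.choose_spec.1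

lemma chain_death (i : ℕ) :
    ∀ X ∈ A, ∀ x : X ⟶ chainB A H i,
      (chainβ A H i).app (op X) x = 0 → x ≫ chainp A H i = 0 :=
  (step_exists H.1 A H.2.2 (chainSig A H i).1 (chainSig A H i).2
    ).choose_spec.choose_spec.choose_spec.2

lemma chain_compat_apply (i : ℕ) {Y : D} (u : Y ⟶ chainB A H i) :
    (chainβ A H i).app (op Y) u = (chainβ A H (i+1)).app (op Y) (u ≫ chainp A H i) := by
  have h := congrArg (fun (η : (linearYoneda R D).obj (chainB A H i) ⟶ M) =>
    η.app (op Y) u) (chain_compat A H i)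
  exact h.symm

lemma chain_surjA (i : ℕ) : ∀ X ∈ A, Function.Surjective ((chainβ A H i).app (op X)) := by
  induction i with
  | zero => exact fun X hX => H.2.1.choose_spec.choose_spec.choose_spec X hX
  | succ j ih =>
    intro X hX m
    obtain ⟨u, hu⟩ := ih X hX m
    exact ⟨u ≫ chainp A H j, (chain_compat_apply A H j u).symm.trans hu⟩

noncomputable def chainP (i : ℕ) : (k : ℕ) → (chainB A H i ⟶ chainB A H (i+k))
  | 0 => 𝟙 _
  | (k+1) => chainP i k ≫ chainp A H (i+k)

lemma chainP_zero (i : ℕ) : chainP A H i 0 = 𝟙 _ := rfl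

lemma chainP_succ (i k : ℕ) :
    chainP A H i (k+1) = chainP A H i k ≫ chainp A H (i+k) := rfl

lemma chain_compatP (i k : ℕ) {Y : D} (u : Y ⟶ chainB A H i) :
    (chainβ A H i).app (op Y) u = (chainβ A H (i+k)).app (op Y) (u ≫ chainP A H i k) := by
  induction k with
  | zero =>
    rw [chainP_zero, Category.comp_id]
    rfl
  | succ k ihk =>
    rw [chainP_succ, ← Category.assoc]
    exact ihk.trans (chain_compat_apply A H (i+k) _)

/-- Main surjectivity induction: `chainβ i` is surjective on `A^{*k}` for `i ≥ k`. -/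
lemma chain_surj (hA1 : (fun X : D => X⟦(1 : ℤ)⟧) '' A = A) :
    ∀ (k : ℕ) (Y : D), Y ∈ starPow D A k → ∀ i, k ≤ i →
      Function.Surjective ((chainβ A H i).app (op Y)) := by
  intro k
  induction k using Nat.strong_induction_on with
  | _ k ih =>
    obtain _|_|k := k
    · rintro Y h; exact absurd h (Set.notMem_empty Y)
    · intro Y hY i _
      exact surj_smd (chainβ A H i) (chain_surjA A H i) Y hY
    · intro Y hY i hi
      have hsurj' : ∀ Y' ∈ starSets D (starPow D A (k+1)) (smdClosure D A),
          Function.Surjective ((chainβ A H i).app (op Y')) := by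
        rintro Y' ⟨X, Z, hX, hZ, f, g, h, hT⟩ m
        obtain ⟨j, rfl⟩ : ∃ j, i = j + 1 := ⟨i - 1, by omega⟩
        have hj : k + 1 ≤ j := by omega
        obtain ⟨u, hu⟩ : ∃ u : X ⟶ chainB A H j, (chainβ A H j).app (op X) u = M.map f.op m :=
            ih (k+1) (by omega) X hX j hj (M.map f.op m)
        have hT' := Pretriangulated.inv_rot_of_distTriang _ hT
        set T : Pretriangulated.Triangle D := Pretriangulated.Triangle.mk f g h with hTdef
        obtain ⟨w, hwdef⟩ : ∃ w : (Z⟦(-1:ℤ)⟧ : D) ⟶ X, w = T.invRotate.mor₁ := ⟨_, rfl⟩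
        have hwf : w ≫ f = 0 := by
          rw [hwdef]; exact Pretriangulated.comp_distTriang_mor_zero₁₂ _ hT'
        have hu' : (chainβ A H j).app (op X) u = M.map f.op m := hu
        have hw0 : (chainβ A H j).app (op (Z⟦(-1:ℤ)⟧)) (w ≫ u) = 0 := by
          rw [nat_app_comp, hu']
          calc M.map w.op (M.map f.op m)
              = M.map (f.op ≫ w.op) m := by rw [M.map_comp]; rfl
            _ = M.map ((w ≫ f)).op m := by rw [op_comp]
            _ = M.map ((0 : Z⟦(-1:ℤ)⟧ ⟶ Y')).op m := by rw [hwf]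
            _ = 0 := by rw [op_zero, M.map_zero]; rfl
        have hdie : (w ≫ u) ≫ chainp A H j = 0 :=
          death_smd (chainβ A H j) (chainp A H j) (chain_death A H j) _
            (smd_shift_neg A hA1 Z hZ) _ hw0
        obtain ⟨v, hv⟩ := Pretriangulated.Triangle.yoneda_exact₂ _ hT'
          (u ≫ chainp A H j) (by rw [← hwdef]; exact (Category.assoc _ _ _).symm.trans hdie)
        obtain ⟨v₀, hv₀⟩ : ∃ v₀ : Y' ⟶ chainB A H (j+1), v₀ = v := ⟨v, rfl⟩
        have hv' : u ≫ chainp A H j = f ≫ v₀ := by rw [hv₀]; exact hv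
        have hfv : M.map f.op (m - (chainβ A H (j+1)).app (op Y') v₀) = 0 := by
          rw [map_sub]
          have h1 : M.map f.op ((chainβ A H (j+1)).app (op Y') v₀) = M.map f.op m := by
            rw [← nat_app_comp (chainβ A H (j+1)) f v₀, ← hv',
              ← chain_compat_apply A H j u, hu']
          rw [h1, sub_self]
        obtain ⟨z, hz⟩ := (H.1 T hT (m - (chainβ A H (j+1)).app (op Y') v₀)).mp hfv
        have hz' : M.map g.op z = m - (chainβ A H (j+1)).app (op Y') v₀ := hz
        obtain ⟨t, ht⟩ : ∃ t : Z ⟶ chainB A H (j+1), (chainβ A H (j+1)).app (op Z) t = z :=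
            surj_smd (chainβ A H (j+1)) (chain_surjA A H (j+1)) Z hZ z
        refine ⟨v₀ + g ≫ t, ?_⟩
        erw [map_add]; rw [nat_app_comp (chainβ A H (j+1)) g t, ht, hz']
        abel
      exact surj_smd (chainβ A H i) hsurj' Y hY

/-- Main kernel-death induction. -/
lemma chain_death_star (hA1 : (fun X : D => X⟦(1 : ℤ)⟧) '' A = A)
    (hA : ∀ W ∈ A, W⟦(1:ℤ)⟧ ∈ A) :
    ∀ (k : ℕ) (Y : D), Y ∈ starPow D A k → ∀ i, k ≤ i →
      ∀ x : Y ⟶ chainB A H i, (chainβ A H i).app (op Y) x = 0 →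
        x ≫ chainP A H i k = 0 := by
  intro k
  induction k using Nat.strong_induction_on with
  | _ k ih =>
    obtain _|_|k := k
    · rintro Y h; exact absurd h (Set.notMem_empty Y)
    · intro Y hY i _ x hx
      rw [chainP_succ, chainP_zero, Category.id_comp]
      exact death_smd (chainβ A H i) (chainp A H i) (chain_death A H i) Y hY x hx
    · intro Y hY i hi
      have hinner : ∀ Y' ∈ starSets D (starPow D A (k+1)) (smdClosure D A),
          ∀ x : Y' ⟶ chainB A H i, (chainβ A H i).app (op Y') x = 0 →
            x ≫ chainP A H i (k+2) = 0 := by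
        rintro Y' ⟨X, Z, hX, hZ, f, g, h, hT⟩ x hx
        set T : Pretriangulated.Triangle D := Pretriangulated.Triangle.mk f g h with hTdef
        have hfx : (chainβ A H i).app (op X) (f ≫ x) = 0 := by
          rw [nat_app_comp, hx]; exact map_zero _
        have hdie := ih (k+1) (by omega) X hX i (by omega) (f ≫ x) hfx
        obtain ⟨t, ht⟩ := Pretriangulated.Triangle.yoneda_exact₂ T hT
          (x ≫ chainP A H i (k+1)) ((Category.assoc _ _ _).symm.trans hdie)
        obtain ⟨t₀, ht₀⟩ : ∃ t₀ : Z ⟶ chainB A H (i+(k+1)), t₀ = t := ⟨t, rfl⟩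
        have ht' : x ≫ chainP A H i (k+1) = g ≫ t₀ := by rw [ht₀]; exact ht
        have hβt : M.map g.op ((chainβ A H (i+(k+1))).app (op Z) t₀) = 0 := by
          rw [← nat_app_comp (chainβ A H (i+(k+1))) g t₀, ← ht',
            ← chain_compatP A H i (k+1) x, hx]
        obtain ⟨m₁, hm₁⟩ := (H.1 T.rotate (Pretriangulated.rot_of_distTriang T hT)
          ((chainβ A H (i+(k+1))).app (op Z) t₀)).mp hβt
        have hm₁' : M.map h.op m₁ = (chainβ A H (i+(k+1))).app (op Z) t₀ := hm₁
        have hX1 : (X⟦(1:ℤ)⟧) ∈ starPow D A (k+1) :=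
          starPow_shift A hA1 hA (k+1) X hX
        obtain ⟨u₁, hu₁⟩ : ∃ u₁ : X⟦(1:ℤ)⟧ ⟶ chainB A H (i+(k+1)),
            (chainβ A H (i+(k+1))).app (op (X⟦(1:ℤ)⟧)) u₁ = m₁ := chain_surj A H hA1 (k+1) _ hX1 (i+(k+1)) (by omega) m₁
        have hd0 : (chainβ A H (i+(k+1))).app (op Z) (t₀ - h ≫ u₁) = 0 := by
          erw [map_sub]; rw [nat_app_comp (chainβ A H (i+(k+1))) h u₁, hu₁, hm₁', sub_self]
        have hdp : (t₀ - h ≫ u₁) ≫ chainp A H (i+(k+1)) = 0 :=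
          death_smd (chainβ A H (i+(k+1))) (chainp A H (i+(k+1)))
            (chain_death A H (i+(k+1))) Z hZ _ hd0
        have hgh : g ≫ h = 0 := Pretriangulated.comp_distTriang_mor_zero₂₃ T hT
        rw [chainP_succ, ← Category.assoc, ht', Category.assoc]
        have htdecomp : t₀ = (t₀ - h ≫ u₁) + h ≫ u₁ := by abel
        rw [htdecomp, Preadditive.add_comp, Preadditive.comp_add, hdp, Limits.comp_zero,
          zero_add, ← Category.assoc, ← Category.assoc, hgh, Limits.zero_comp,
          Limits.zero_comp]
      exact death_smd (chainβ A H i) (chainP A H i (k+2)) hinner Y hY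


/-- a direct summand of a representable functor is representable when `D` is karoubian -/
lemma summand_to_rep (hic : IsIdempotentComplete D)
    (hsum : IsSummandOfRepresentable R M) : IsRepresentableMod R M := by
  obtain ⟨B', s, r, hsr⟩ := hsum
  set ε : B' ⟶ B' := (r ≫ s).app (op B') (𝟙 B') with hεdef
  have happ : ∀ {Y : D} (u : Y ⟶ B'), (r ≫ s).app (op Y) u = u ≫ ε :=
    fun {Y} u => nat_eq_elt (r ≫ s) u
  have hidem : ε ≫ ε = ε := by
    have hcomp : (r ≫ s) ≫ (r ≫ s) = r ≫ s := by
      calc (r ≫ s) ≫ (r ≫ s) = r ≫ (s ≫ r) ≫ s := by simp [Category.assoc]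
        _ = r ≫ s := by rw [hsr, Category.id_comp]
    have h2 := congrArg (fun (η : (linearYoneda R D).obj B' ⟶ (linearYoneda R D).obj B')
      => η.app (op B') (𝟙 B')) hcomp
    exact (happ ε).symm.trans h2
  obtain ⟨Yo, io, eo, hie, hei⟩ := hic.idempotents_split B' ε hidem
  have hmapε : (linearYoneda R D).map ε = r ≫ s := by
    apply NatTrans.ext; funext Y; apply ModuleCat.hom_ext; apply LinearMap.ext; intro u
    exact (happ (u : unop Y ⟶ B')).symm
  refine ⟨Yo, ⟨⟨s ≫ (linearYoneda R D).map eo, (linearYoneda R D).map io ≫ r, ?_, ?_⟩⟩⟩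
  · have hmm : (linearYoneda R D).map eo ≫ (linearYoneda R D).map io = r ≫ s := by
      rw [← CategoryTheory.Functor.map_comp, hei, hmapε]
    calc (s ≫ (linearYoneda R D).map eo) ≫ ((linearYoneda R D).map io ≫ r)
        = s ≫ ((linearYoneda R D).map eo ≫ (linearYoneda R D).map io) ≫ r := by
          simp [Category.assoc]
      _ = s ≫ (r ≫ s) ≫ r := by rw [hmm]
      _ = (s ≫ r) ≫ (s ≫ r) := by simp [Category.assoc]
      _ = 𝟙 M := by rw [hsr, Category.id_comp]
  · have hioε : io ≫ ε ≫ eo = 𝟙 Yo := by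
      rw [← hei]
      calc io ≫ (eo ≫ io) ≫ eo = (io ≫ eo) ≫ (io ≫ eo) := by simp [Category.assoc]
        _ = 𝟙 Yo := by rw [hie, Category.id_comp]
    calc ((linearYoneda R D).map io ≫ r) ≫ (s ≫ (linearYoneda R D).map eo)
        = (linearYoneda R D).map io ≫ (r ≫ s) ≫ (linearYoneda R D).map eo := by
          simp [Category.assoc]
      _ = (linearYoneda R D).map io ≫ (linearYoneda R D).map ε ≫
            (linearYoneda R D).map eo := by rw [hmapε]
      _ = (linearYoneda R D).map (io ≫ ε ≫ eo) := by
          rw [CategoryTheory.Functor.map_comp, CategoryTheory.Functor.map_comp]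
      _ = 𝟙 _ := by rw [hioε, CategoryTheory.Functor.map_id]

end RepresentabilityProof

/-!
Statement 7.
Let `M : D → Mod-R` be a cohomological contravariant functor and `A ⊆ D` a full
subcategory with `A[1] = A`, `A` precovering, and `A^{*n} = D` for some `n ≥ 1`.  If `M` is
`A`-finitely generated and the kernel of every natural transformation `D(-,D₀) → M` is
`A`-finitely generated, then `M` is isomorphic to a direct summand of a representable
functor; if moreover `D` is karoubian, `M` is representable.
-/
theorem main_representability
    (M : Dᵒᵖ ⥤ ModuleCat.{v} R) [M.Additive] [M.Linear R]
    (hM : IsCohomological R M)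
    (A : Set D) (hA1 : (fun X : D => X⟦(1 : ℤ)⟧) '' A = A)
    -- `A` is precovering
    (hprecover : ∀ D₀ : D, ∃ (A₀ : D) (_ : A₀ ∈ A) (p : A₀ ⟶ D₀),
      ∀ X ∈ A, ∀ u : X ⟶ D₀, ∃ v : X ⟶ A₀, v ≫ p = u)
    -- `A^{*n} = D` for some `n ≥ 1`
    (hgen : ∃ n : ℕ, 1 ≤ n ∧ starPow D A n = Set.univ)
    (hfg : IsRelFinitelyGenerated R A M)
    (hker : ∀ (D₀ : D) (β : (linearYoneda R D).obj D₀ ⟶ M), KernelIsRelFG R A β) :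
    IsSummandOfRepresentable R M ∧
    (IsIdempotentComplete D → IsRepresentableMod R M) := by
  classical
  obtain ⟨n, hn1, hstar⟩ := hgen
  have H : GoodSetup A M := ⟨hM, hfg, hker⟩
  have hA : ∀ W ∈ A, W⟦(1:ℤ)⟧ ∈ A := by
    intro W hW
    rw [← hA1]; exact Set.mem_image_of_mem _ hW
  have hsurjn : ∀ (Y : D), Function.Surjective ((chainβ A H n).app (op Y)) := fun Y =>
    chain_surj A H hA1 n Y (by rw [hstar]; trivial) n le_rfl
  have hdeathn : ∀ (Y : D) (x : Y ⟶ chainB A H n),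
      (chainβ A H n).app (op Y) x = 0 → x ≫ chainP A H n n = 0 :=
    fun Y x hx => chain_death_star A H hA1 hA n Y (by rw [hstar]; trivial) n le_rfl x hx
  have hkey : ∀ {Y : D} (u u' : Y ⟶ chainB A H n),
      (chainβ A H n).app (op Y) u = (chainβ A H n).app (op Y) u' →
        u ≫ chainP A H n n = u' ≫ chainP A H n n := by
    intro Y u u' hμ
    have h0 : (chainβ A H n).app (op Y) (u - u') = 0 := by erw [map_sub]; rw [hμ, sub_self]
    have hd := hdeathn Y (u - u') h0
    rw [Preadditive.sub_comp] at hd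
    exact sub_eq_zero.mp hd
  let pick : ∀ {Y : D}, M.obj (op Y) → (Y ⟶ chainB A H n) := fun {Y} m => (hsurjn Y m).choose
  have hpick : ∀ {Y : D} (m : M.obj (op Y)), (chainβ A H n).app (op Y) (pick m) = m :=
    fun {Y} m => (hsurjn Y m).choose_spec
  let s : M ⟶ (linearYoneda R D).obj (chainB A H (n+n)) :=
    { app := fun Y => ModuleCat.ofHom
        { toFun := fun m => pick (Y := unop Y) m ≫ chainP A H n n
          map_add' := fun m m' => by
            have heq : (chainβ A H n).app (op (unop Y)) (pick (m + m')) =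
                (chainβ A H n).app (op (unop Y)) (pick m + pick m') := by
              rw [hpick]; erw [map_add]; rw [hpick, hpick]
            show pick (m + m') ≫ chainP A H n n =
              pick m ≫ chainP A H n n + pick m' ≫ chainP A H n n
            rw [hkey _ _ heq, Preadditive.add_comp]
          map_smul' := fun c m => by
            have heq : (chainβ A H n).app (op (unop Y)) (pick (c • m)) =
                (chainβ A H n).app (op (unop Y)) (c • pick m) := by
              rw [hpick]; erw [map_smul]; rw [hpick]
            show pick (c • m) ≫ chainP A H n n = c • (pick m ≫ chainP A H n n)
            rw [hkey _ _ heq, Linear.smul_comp] }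
      naturality := fun {Y Y'} fop => by
        apply ModuleCat.hom_ext; apply LinearMap.ext; intro m
        show pick (M.map fop m) ≫ chainP A H n n = fop.unop ≫ (pick m ≫ chainP A H n n)
        have heq : (chainβ A H n).app (op (unop Y')) (pick (M.map fop m)) =
            (chainβ A H n).app (op (unop Y')) (fop.unop ≫ pick m) := by
          rw [hpick, nat_app_comp (chainβ A H n) fop.unop (pick m), hpick]
          rfl
        rw [hkey _ _ heq, Category.assoc] }
  have hsplit : s ≫ chainβ A H (n+n) = 𝟙 M := by
    apply NatTrans.ext; funext Y; apply ModuleCat.hom_ext; apply LinearMap.ext; intro m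
    show (chainβ A H (n+n)).app (op (unop Y)) (pick m ≫ chainP A H n n) = m
    rw [← chain_compatP A H n n (pick m)]
    exact hpick m
  have hsum : IsSummandOfRepresentable R M :=
    ⟨chainB A H (n+n), s, chainβ A H (n+n), hsplit⟩
  exact ⟨hsum, fun hic => summand_to_rep hic hsum⟩

end Paper
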